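/- With notation as above, let x = yz with y ∈ ∏_{r=1}^k C_p[r] and z ∈ 𝔖_k^{[p]}. Then xDx⁻¹ ∩ Δ = yΔy⁻¹ ∩ Δ, and this equals Δ if y ∈ Δ_k(C_p), and equals Δ_k(C_p) otherwise. -/

import Mathlib

/-! We realize the symmetric group `𝔖_{pk}` as `Equiv.Perm (Fin k × Fin p)`, where the pair
`(r, i)` denotes the `i`-th entry of the `r`-th one of the `k` successive blocks of size
`p` in `{1, …, pk}`. -/

/-- `Δ_k : 𝔖_p →* 𝔖_{pk}`: the diagonal embedding, acting simultaneously on each of the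
`k` blocks of size `p`. -/
def diagHom (k p : ℕ) : Equiv.Perm (Fin p) →* Equiv.Perm (Fin k × Fin p) where
  toFun σ := Equiv.prodCongrRight fun _ => σ
  map_one' := by
    ext x
    · rfl
    · rfl
  map_mul' σ τ := by
    ext x
    · rfl
    · rfl

/-- `τ ↦ τ^{[p]} : 𝔖_k →* 𝔖_{pk}`: permuting the `k` blocks of size `p`. -/
def blockHom (k p : ℕ) : Equiv.Perm (Fin k) →* Equiv.Perm (Fin k × Fin p) where
  toFun τ := Equiv.prodCongrLeft fun _ => τ
  map_one' := by
    ext x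
    · rfl
    · rfl
  map_mul' σ τ := by
    ext x
    · rfl
    · rfl

/-- `(σ_1, …, σ_k) ↦ ∏_{r=1}^k σ_r[r]`: each `σ_r` acts on the `r`-th block of size `p`. -/
def blockwiseHom (k p : ℕ) : (Fin k → Equiv.Perm (Fin p)) →* Equiv.Perm (Fin k × Fin p) where
  toFun y := Equiv.prodCongrRight y
  map_one' := by
    ext x
    · rfl
    · rfl
  map_mul' y z := by
    ext x
    · rfl
    · rfl

/-- The subgroup `∏_{r=1}^k C_p[r]` of `𝔖_{pk}`, where `C_p = ⟨finRotate p⟩` is generated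
by a `p`-cycle. -/
def bigCpSubgroup (k p : ℕ) : Subgroup (Equiv.Perm (Fin k × Fin p)) :=
  Subgroup.map (blockwiseHom k p)
    (Subgroup.pi Set.univ fun _ => Subgroup.zpowers (finRotate p))

/-- The diagonal subgroup `Δ_k(𝔖_p)`. -/
def diagSubgroup (k p : ℕ) : Subgroup (Equiv.Perm (Fin k × Fin p)) :=
  (diagHom k p).range

/-- The diagonal subgroup `Δ_k(C_p)` of the cyclic group `C_p = ⟨finRotate p⟩`. -/
def diagCpSubgroup (k p : ℕ) : Subgroup (Equiv.Perm (Fin k × Fin p)) :=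
  Subgroup.map (diagHom k p) (Subgroup.zpowers (finRotate p))

/-- The subgroup `𝔖_k^{[p]}` of block permutations. -/
def blockSubgroup (k p : ℕ) : Subgroup (Equiv.Perm (Fin k × Fin p)) :=
  (blockHom k p).range

/-- The subgroup `D = Δ_k(𝔖_p) · C_k^{[p]}`, where `C_k = ⟨finRotate k⟩ ≤ 𝔖_k` is generated
by a `k`-cycle (`Δ_k(𝔖_p)` and `C_k^{[p]}` centralize each other, so `D` is their join). -/
def Dsubgroup (k p : ℕ) : Subgroup (Equiv.Perm (Fin k × Fin p)) :=
  diagSubgroup k p ⊔ Subgroup.map (blockHom k p) (Subgroup.zpowers (finRotate k))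
namespace ConjAux

open Fin.NatCast

lemma perm_apply_inv_self {α : Type*} (f : Equiv.Perm α) (x : α) : f (f⁻¹ x) = x :=
  f.apply_symm_apply x

lemma perm_inv_apply_self {α : Type*} (f : Equiv.Perm α) (x : α) : f⁻¹ (f x) = x :=
  f.symm_apply_apply x

lemma bw_apply {k p : ℕ} (f : Fin k → Equiv.Perm (Fin p)) (r : Fin k) (i : Fin p) :
    blockwiseHom k p f (r, i) = (r, f r i) := rfl

lemma bw_inv_apply {k p : ℕ} (f : Fin k → Equiv.Perm (Fin p)) (r : Fin k) (i : Fin p) :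
    (blockwiseHom k p f)⁻¹ (r, i) = (r, (f r)⁻¹ i) := rfl

lemma bh_apply {k p : ℕ} (τ : Equiv.Perm (Fin k)) (r : Fin k) (i : Fin p) :
    blockHom k p τ (r, i) = (τ r, i) := rfl

lemma bh_inv_apply {k p : ℕ} (τ : Equiv.Perm (Fin k)) (r : Fin k) (i : Fin p) :
    (blockHom k p τ)⁻¹ (r, i) = (τ⁻¹ r, i) := rfl

lemma dh_apply {k p : ℕ} (σ : Equiv.Perm (Fin p)) (r : Fin k) (i : Fin p) :
    diagHom k p σ (r, i) = (r, σ i) := rfl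

lemma dh_eq_bw {k p : ℕ} (σ : Equiv.Perm (Fin p)) :
    diagHom k p σ = blockwiseHom k p (fun _ => σ) := rfl

lemma bw_injective (k p : ℕ) : Function.Injective (blockwiseHom k p) := by
  intro f g h
  funext r
  ext i
  have h1 : blockwiseHom k p f (r, i) = blockwiseHom k p g (r, i) := by rw [h]
  rw [bw_apply, bw_apply] at h1
  exact congrArg (fun a => (Prod.snd a : Fin p).val) h1

lemma conj_diag {k p : ℕ} (f : Fin k → Equiv.Perm (Fin p)) (σ : Equiv.Perm (Fin p)) :
    blockwiseHom k p f * diagHom k p σ * (blockwiseHom k p f)⁻¹ =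
      blockwiseHom k p (fun r => f r * σ * (f r)⁻¹) := by
  rw [dh_eq_bw, ← map_inv, ← map_mul, ← map_mul]
  rfl

lemma zpowers_comm {G : Type*} [Group G] {c a b : G} (ha : a ∈ Subgroup.zpowers c)
    (hb : b ∈ Subgroup.zpowers c) : a * b = b * a := by
  obtain ⟨m, rfl⟩ := ha
  obtain ⟨n, rfl⟩ := hb
  rw [← zpow_add, ← zpow_add, add_comm]

lemma map_conj_self {G : Type*} [Group G] {H : Subgroup G} {y : G} (hy : y ∈ H) :
    Subgroup.map (MulAut.conj y).toMonoidHom H = H := by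
  ext g
  simp only [Subgroup.mem_map, MulEquiv.coe_toMonoidHom, MulAut.conj_apply]
  constructor
  · rintro ⟨d, hd, rfl⟩
    exact mul_mem (mul_mem hy hd) (inv_mem hy)
  · intro hg
    exact ⟨y⁻¹ * g * y, mul_mem (mul_mem (inv_mem hy) hg) hy, by group⟩

lemma finRotate_pow_apply {n : ℕ} (m : ℕ) (x : Fin (n + 1)) :
    (finRotate (n + 1) ^ m) x = x + (m : Fin (n + 1)) := by
  induction m with
  | zero => simp
  | succ m ih =>
    rw [pow_succ', Equiv.Perm.mul_apply, finRotate_succ_apply, ih]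
    push_cast
    rw [add_assoc]

lemma finRotate_pow_self (n : ℕ) : finRotate (n + 1) ^ (n + 1) = 1 := by
  apply Equiv.ext
  intro x
  rw [finRotate_pow_apply, Fin.natCast_self]
  simp

lemma finRotate_zpow_dvd {n : ℕ} {d : ℤ} (h : ((n + 1 : ℕ) : ℤ) ∣ d) :
    finRotate (n + 1) ^ d = 1 := by
  obtain ⟨e, rfl⟩ := h
  rw [zpow_mul, zpow_natCast, finRotate_pow_self, one_zpow]

lemma commute_mem_zpowers {n : ℕ} {σ : Equiv.Perm (Fin (n + 1))}
    (h : Commute σ (finRotate (n + 1))) : σ ∈ Subgroup.zpowers (finRotate (n + 1)) := by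
  have key : ∀ x : Fin (n + 1), σ x = x + σ 0 := by
    intro x
    have h1 : (finRotate (n + 1) ^ (x : ℕ)) 0 = x := by
      rw [finRotate_pow_apply, Fin.cast_val_eq_self, zero_add]
    calc σ x = σ ((finRotate (n + 1) ^ (x : ℕ)) 0) := by rw [h1]
      _ = (σ * finRotate (n + 1) ^ (x : ℕ)) 0 := rfl
      _ = (finRotate (n + 1) ^ (x : ℕ) * σ) 0 := by rw [(h.pow_right _).eq]
      _ = σ 0 + x := by rw [Equiv.Perm.mul_apply, finRotate_pow_apply, Fin.cast_val_eq_self]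
      _ = x + σ 0 := add_comm _ _
  have hσ : σ = finRotate (n + 1) ^ ((σ 0 : Fin (n + 1)) : ℕ) := by
    apply Equiv.ext
    intro x
    rw [finRotate_pow_apply, Fin.cast_val_eq_self, key]
  rw [hσ]
  exact Subgroup.pow_mem _ (Subgroup.mem_zpowers _) _

lemma mem_zpowers_of_commute {p : ℕ} (hp : p.Prime) {σ w : Equiv.Perm (Fin p)}
    (hw : w ∈ Subgroup.zpowers (finRotate p)) (hw1 : w ≠ 1)
    (hc : Commute σ w) : σ ∈ Subgroup.zpowers (finRotate p) := by
  obtain ⟨n, rfl⟩ : ∃ n, p = n + 1 := ⟨p - 1, (Nat.succ_pred_eq_of_pos hp.pos).symm⟩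
  obtain ⟨d, hd'⟩ := hw
  have hd : finRotate (n + 1) ^ d = w := hd'
  have hdvd : ¬ ((n + 1 : ℕ) : ℤ) ∣ d := fun h' => hw1 (hd ▸ finRotate_zpow_dvd h')
  have hcop : IsCoprime ((n + 1 : ℕ) : ℤ) d := by
    rw [Int.isCoprime_iff_gcd_eq_one]
    have : ¬ (n + 1) ∣ d.natAbs := fun h => hdvd (Int.natCast_dvd.mpr h)
    have := (Nat.Prime.coprime_iff_not_dvd hp).mpr this
    rw [Int.gcd_eq_natAbs_gcd_natAbs, Int.natAbs_natCast]
    exact this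
  obtain ⟨u, v, huv⟩ := hcop
  have hkey : finRotate (n + 1) = w ^ v := by
    calc finRotate (n + 1) = finRotate (n + 1) ^ (u * ((n + 1 : ℕ) : ℤ) + v * d) := by
          rw [huv, zpow_one]
      _ = (finRotate (n + 1) ^ (((n + 1 : ℕ)) : ℤ)) ^ u * (finRotate (n + 1) ^ d) ^ v := by
          rw [zpow_add, zpow_mul', zpow_mul']
      _ = w ^ v := by
          rw [zpow_natCast, finRotate_pow_self, one_zpow, one_mul, hd]
  apply commute_mem_zpowers
  rw [hkey]
  exact hc.zpow_right v


def prodHom (k p : ℕ) : Equiv.Perm (Fin p) × Equiv.Perm (Fin k) →* Equiv.Perm (Fin k × Fin p) where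
  toFun a := diagHom k p a.1 * blockHom k p a.2
  map_one' := by simp
  map_mul' a b := Equiv.ext fun x => rfl

lemma prodHom_apply {k p : ℕ} (a : Equiv.Perm (Fin p) × Equiv.Perm (Fin k)) :
    prodHom k p a = diagHom k p a.1 * blockHom k p a.2 := rfl

lemma mem_D_iff {k p : ℕ} (g : Equiv.Perm (Fin k × Fin p)) :
    g ∈ Dsubgroup k p ↔ ∃ σ ρ, ρ ∈ Subgroup.zpowers (finRotate k) ∧
      g = diagHom k p σ * blockHom k p ρ := by
  have hD : Dsubgroup k p =
      Subgroup.map (prodHom k p) ((⊤ : Subgroup (Equiv.Perm (Fin p))).prod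
        (Subgroup.zpowers (finRotate k))) := by
    apply le_antisymm
    · apply sup_le
      · rintro g ⟨σ, rfl⟩
        exact ⟨(σ, 1), ⟨trivial, Subgroup.one_mem _⟩, by simp [prodHom_apply]⟩
      · rintro g ⟨ρ, hρ, rfl⟩
        exact ⟨(1, ρ), ⟨trivial, hρ⟩, by simp [prodHom_apply]⟩
    · rintro g ⟨⟨σ, ρ⟩, ⟨-, hρ⟩, rfl⟩
      rw [prodHom_apply]
      exact mul_mem ((le_sup_left : diagSubgroup k p ≤ Dsubgroup k p) ⟨σ, rfl⟩)
        ((le_sup_right : _ ≤ Dsubgroup k p) ⟨ρ, hρ, rfl⟩)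
  rw [hD]
  constructor
  · rintro ⟨⟨σ, ρ⟩, ⟨-, hρ⟩, rfl⟩
    exact ⟨σ, ρ, hρ, rfl⟩
  · rintro ⟨σ, ρ, hρ, rfl⟩
    exact ⟨(σ, ρ), ⟨trivial, hρ⟩, rfl⟩

end ConjAux

open ConjAux

/-- With `x = y z`, `y ∈ ∏_{r=1}^k C_p[r]` and `z ∈ 𝔖_k^{[p]}`, we have
`xDx⁻¹ ∩ Δ = yΔy⁻¹ ∩ Δ`, and this equals `Δ` if `y ∈ Δ_k(C_p)` and `Δ_k(C_p)` otherwise. -/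
theorem conjugate_intersection_diagonal
    (p k : ℕ) [hp : Fact p.Prime] (hk : 0 < k) (hpk : ¬ p ∣ k)
    (y z : Equiv.Perm (Fin k × Fin p))
    (hy : y ∈ bigCpSubgroup k p) (hz : z ∈ blockSubgroup k p) :
    (Subgroup.map (MulAut.conj (y * z)).toMonoidHom (Dsubgroup k p) ⊓ diagSubgroup k p =
      Subgroup.map (MulAut.conj y).toMonoidHom (diagSubgroup k p) ⊓ diagSubgroup k p) ∧
    (y ∈ diagCpSubgroup k p →
      Subgroup.map (MulAut.conj (y * z)).toMonoidHom (Dsubgroup k p) ⊓ diagSubgroup k p =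
        diagSubgroup k p) ∧
    (y ∉ diagCpSubgroup k p →
      Subgroup.map (MulAut.conj (y * z)).toMonoidHom (Dsubgroup k p) ⊓ diagSubgroup k p =
        diagCpSubgroup k p) := by
  obtain ⟨f, hfmem, rfl⟩ := hy
  obtain ⟨τ, rfl⟩ := hz
  have hf : ∀ r, f r ∈ Subgroup.zpowers (finRotate p) := fun r => hfmem r (Set.mem_univ r)
  have P1 : ∀ σ : Equiv.Perm (Fin p),
      (MulAut.conj (blockwiseHom k p f * blockHom k p τ)).toMonoidHom (diagHom k p σ) =
        blockwiseHom k p (fun r => f r * σ * (f r)⁻¹) := by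
    intro σ
    apply Equiv.ext
    rintro ⟨r, i⟩
    simp only [MulEquiv.coe_toMonoidHom, MulAut.conj_apply, mul_inv_rev, Equiv.Perm.mul_apply,
      bw_apply, bh_apply, dh_apply, bw_inv_apply, bh_inv_apply,
      perm_apply_inv_self, perm_inv_apply_self]
  have P2 : ∀ σ : Equiv.Perm (Fin p),
      (MulAut.conj (blockwiseHom k p f)).toMonoidHom (diagHom k p σ) =
        blockwiseHom k p (fun r => f r * σ * (f r)⁻¹) := by
    intro σ
    simp only [MulEquiv.coe_toMonoidHom, MulAut.conj_apply]
    exact conj_diag f σ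
  have part1 : Subgroup.map (MulAut.conj (blockwiseHom k p f * blockHom k p τ)).toMonoidHom
        (Dsubgroup k p) ⊓ diagSubgroup k p =
      Subgroup.map (MulAut.conj (blockwiseHom k p f)).toMonoidHom (diagSubgroup k p) ⊓
        diagSubgroup k p := by
    ext g
    simp only [Subgroup.mem_inf]
    constructor
    · rintro ⟨hg1, hg2⟩
      refine ⟨?_, hg2⟩
      obtain ⟨d, hd, rfl⟩ := Subgroup.mem_map.mp hg1
      rw [mem_D_iff] at hd
      obtain ⟨σ, ρ, hρ, rfl⟩ := hd
      obtain ⟨σ', hσ'⟩ := hg2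
      have hρ1 : ρ = 1 := by
        apply Equiv.ext
        intro s
        have h0 := congrArg (fun e => (e (τ s, (⟨0, hp.out.pos⟩ : Fin p))).1) hσ'
        simp only [MulEquiv.coe_toMonoidHom, MulAut.conj_apply, mul_inv_rev,
          Equiv.Perm.mul_apply, bw_apply, bh_apply, dh_apply, bw_inv_apply, bh_inv_apply,
          perm_inv_apply_self, perm_apply_inv_self] at h0
        rw [Equiv.Perm.one_apply]
        exact (τ.injective h0).symm
      subst hρ1
      simp only [map_one, mul_one]
      exact Subgroup.mem_map.mpr ⟨diagHom k p σ, ⟨σ, rfl⟩, by rw [P2 σ, P1 σ]⟩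
    · rintro ⟨hg1, hg2⟩
      refine ⟨?_, hg2⟩
      obtain ⟨d, hd, rfl⟩ := Subgroup.mem_map.mp hg1
      obtain ⟨σ, rfl⟩ := hd
      refine Subgroup.mem_map.mpr ⟨diagHom k p σ, ?_, by rw [P1 σ, P2 σ]⟩
      rw [mem_D_iff]
      exact ⟨σ, 1, one_mem _, by rw [map_one, mul_one]⟩
  refine ⟨part1, ?_, ?_⟩
  · intro hyd
    have hY : blockwiseHom k p f ∈ diagSubgroup k p := by
      obtain ⟨u, -, hu⟩ := hyd
      exact ⟨u, hu⟩
    rw [part1, map_conj_self hY, inf_idem]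
  · intro hyd
    rw [part1]
    ext g
    simp only [Subgroup.mem_inf]
    constructor
    · rintro ⟨hg1, hg2⟩
      obtain ⟨d, hd, rfl⟩ := Subgroup.mem_map.mp hg1
      obtain ⟨σ, rfl⟩ := hd
      obtain ⟨σ', hσ'⟩ := hg2
      rw [P2 σ] at hσ'
      have hconst : ∀ r, f r * σ * (f r)⁻¹ = σ' := by
        intro r
        have h : (fun _ => σ') = fun r => f r * σ * (f r)⁻¹ :=
          bw_injective k p (by rw [← dh_eq_bw, hσ'])
        exact (congrFun h r).symm
      have hex : ∃ r s, f r ≠ f s := by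
        by_contra hcon
        push_neg at hcon
        apply hyd
        refine ⟨f ⟨0, hk⟩, hf _, ?_⟩
        rw [dh_eq_bw]
        congr 1
        funext r
        exact hcon _ _
      obtain ⟨r0, s0, hne⟩ := hex
      have h1 : f r0 * σ * (f r0)⁻¹ = f s0 * σ * (f s0)⁻¹ := by rw [hconst r0, hconst s0]
      have h2 : ((f s0)⁻¹ * f r0) * σ = σ * ((f s0)⁻¹ * f r0) := by
        calc ((f s0)⁻¹ * f r0) * σ
            = (f s0)⁻¹ * (f r0 * σ * (f r0)⁻¹) * f r0 := by group
          _ = (f s0)⁻¹ * (f s0 * σ * (f s0)⁻¹) * f r0 := by rw [h1]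
          _ = σ * ((f s0)⁻¹ * f r0) := by group
      have hw1 : (f s0)⁻¹ * f r0 ≠ 1 := fun h => hne (inv_mul_eq_one.mp h).symm
      have hσmem : σ ∈ Subgroup.zpowers (finRotate p) :=
        mem_zpowers_of_commute hp.out (mul_mem (inv_mem (hf s0)) (hf r0)) hw1 h2.symm
      have hfix : (fun r => f r * σ * (f r)⁻¹) = fun _ => σ := by
        funext r
        rw [zpowers_comm (hf r) hσmem, mul_inv_cancel_right]
      exact Subgroup.mem_map.mpr ⟨σ, hσmem, by rw [P2 σ, hfix, ← dh_eq_bw]⟩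
    · intro hg
      obtain ⟨σ, hσmem, rfl⟩ := Subgroup.mem_map.mp hg
      have hfix : (fun r => f r * σ * (f r)⁻¹) = fun _ => σ := by
        funext r
        rw [zpowers_comm (hf r) hσmem, mul_inv_cancel_right]
      refine ⟨Subgroup.mem_map.mpr ⟨diagHom k p σ, ⟨σ, rfl⟩, ?_⟩, ⟨σ, rfl⟩⟩
      rw [P2 σ, hfix, ← dh_eq_bw]
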